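/- Let G be a finite group, p a prime, and P₀ ≤ P₁ ≤ ⋯ ≤ Pₙ₊₁ a chain of p-subgroups of G with each Pᵢ normal in Pₙ₊₁ for i ≤ n+1. If Pₙ₊₁ is a Sylow p-subgroup of ⋂_{i=0}^{n+1} N_G(Pᵢ), then Pₙ₊₁ is a Sylow p-subgroup of ⋂_{i=0}^{n} N_G(Pᵢ). -/

import Mathlib

/-- `Q` is a Sylow `p`-subgroup of the subgroup `H`: it is contained in `H` and its
order is the full `p`-part of the order of `H`. -/
def IsSylowIn (p : ℕ) {G : Type*} [Group G] (Q H : Subgroup G) : Prop :=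
  Q ≤ H ∧ Nat.card Q = p ^ (Nat.card H).factorization p

/-- If the top of a chain of p-subgroups (each normal in the top) is Sylow in the
intersection of all the normalizers, then it is Sylow in the intersection of the
normalizers of the truncated chain. -/
theorem sylow_of_sylow_in_smaller_intersection
    {G : Type*} [Group G] [Finite G] {p : ℕ} [Fact p.Prime]
    {n : ℕ} (P : Fin (n + 2) → Subgroup G)
    (hmono : Monotone P)
    (hpgrp : ∀ i, IsPGroup p (P i))
    (hnorm : ∀ i, P (Fin.last (n + 1)) ≤ Subgroup.normalizer (P i : Set G))
    (hSyl : IsSylowIn p (P (Fin.last (n + 1))) (⨅ i, Subgroup.normalizer (P i : Set G))) :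
    IsSylowIn p (P (Fin.last (n + 1)))
      (⨅ i : Fin (n + 1), Subgroup.normalizer (P i.castSucc : Set G)) := by
  classical
  obtain ⟨hQK, hcardQ⟩ := hSyl
  set Q := P (Fin.last (n + 1)) with hQdef
  set H := ⨅ i : Fin (n + 1), Subgroup.normalizer (P i.castSucc : Set G) with hHdef
  set K := ⨅ i : Fin (n + 2), Subgroup.normalizer (P i : Set G) with hKdef
  have hQH : Q ≤ H := le_iInf fun i => hnorm i.castSucc
  refine ⟨hQH, ?_⟩
  have hpQ : IsPGroup p Q := hpgrp _
  have hpQ' : IsPGroup p (Q.subgroupOf H) :=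
    hpQ.of_equiv (Subgroup.subgroupOfEquivOfLe hQH).symm
  obtain ⟨S, hQS⟩ := hpQ'.exists_le_sylow
  have hcardS : Nat.card S = p ^ (Nat.card H).factorization p :=
    S.card_eq_multiplicity
  have hQeqS : Q.subgroupOf H = S.toSubgroup := by
    by_contra hne
    have hlt : Q.subgroupOf H < S.toSubgroup := hQS.lt_of_ne hne
    -- pass to subgroup of S
    set T : Subgroup S := (Q.subgroupOf H).subgroupOf S.toSubgroup with hTdef
    have hTne : T ≠ ⊤ := fun h => hlt.not_ge (Subgroup.subgroupOf_eq_top.mp h)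
    haveI hnilp : Group.IsNilpotent (↥S.toSubgroup) := S.isPGroup'.isNilpotent
    have hTlt : T < Subgroup.normalizer (T : Set S) :=
      normalizerCondition_of_isNilpotent T (lt_top_iff_ne_top.mpr hTne)
    obtain ⟨x, hxN, hxT⟩ := SetLike.exists_of_lt hTlt
    set g : G := ((x : H) : G) with hgdef
    have hgS : (x : H) ∈ S.toSubgroup := x.2
    have hgH : g ∈ H := (x : H).2
    have hgQ : g ∉ Q := by
      intro hgQ
      exact hxT (Subgroup.mem_subgroupOf.mpr (Subgroup.mem_subgroupOf.mpr hgQ))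
    -- conjugation by elements of normalizer of T preserves Q
    have key : ∀ y : S, y ∈ Subgroup.normalizer (T : Set S) → ∀ h : G, h ∈ Q →
        ((y : H) : G) * h * ((y : H) : G)⁻¹ ∈ Q := by
      intro y hy h hh
      have hhH : h ∈ H := hQH hh
      have hhS : (⟨h, hhH⟩ : H) ∈ S.toSubgroup := hQS (Subgroup.mem_subgroupOf.mpr hh)
      have hhT : (⟨⟨h, hhH⟩, hhS⟩ : S) ∈ T :=
        Subgroup.mem_subgroupOf.mpr (Subgroup.mem_subgroupOf.mpr hh)
      have := (Subgroup.mem_normalizer_iff.mp hy (⟨⟨h, hhH⟩, hhS⟩ : S)).mp hhT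
      have h2 := Subgroup.mem_subgroupOf.mp (Subgroup.mem_subgroupOf.mp this)
      simpa using h2
    have hgN : g ∈ Subgroup.normalizer (Q : Set G) := by
      rw [Subgroup.mem_normalizer_iff]
      intro h
      constructor
      · intro hh; exact key x hxN h hh
      · intro hh
        have := key x⁻¹ (inv_mem hxN) _ hh
        simpa [mul_assoc, hgdef] using this
    -- g has p-power order
    obtain ⟨k, hk⟩ := S.isPGroup' x
    have hgk : g ^ p ^ k = 1 := by
      have : ((x ^ p ^ k : S) : G) = ((1 : S) : G) := by rw [hk]
      simpa using this
    have hpz : IsPGroup p (Subgroup.zpowers g) := by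
      intro y
      obtain ⟨m, hm⟩ := y.2
      refine ⟨k, ?_⟩
      have : (y : G) ^ p ^ k = 1 := by
        rw [← hm, ← zpow_natCast, ← zpow_mul, mul_comm, zpow_mul, zpow_natCast, hgk, one_zpow]
      exact Subtype.ext (by simpa using this)
    -- R := Q ⊔ zpowers g is a p-subgroup of K strictly containing Q
    set R := Q ⊔ Subgroup.zpowers g with hRdef
    have hpR : IsPGroup p R :=
      IsPGroup.to_sup_of_normal_left' hpQ hpz ((Subgroup.zpowers_le).mpr hgN)
    have hgK : g ∈ K := by
      rw [hKdef, Subgroup.mem_iInf]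
      intro i
      induction i using Fin.lastCases with
      | last => exact hgN
      | cast j => exact (Subgroup.mem_iInf.mp hgH) j
    have hRK : R ≤ K := sup_le hQK ((Subgroup.zpowers_le).mpr hgK)
    have hRcard : Nat.card R ≤ Nat.card Q := by
      obtain ⟨m, hm⟩ := IsPGroup.iff_card.mp hpR
      rw [hm, hcardQ]
      exact Nat.pow_le_pow_right (Fact.out : p.Prime).pos
        ((Nat.Prime.pow_dvd_iff_le_factorization Fact.out (Nat.card_pos).ne').mp
          (hm ▸ Subgroup.card_dvd_of_le hRK))
    have : Q = R := Subgroup.eq_of_le_of_card_ge le_sup_left hRcard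
    exact hgQ (this ▸ Subgroup.mem_sup_right (Subgroup.mem_zpowers g))
  calc Nat.card Q = Nat.card (Q.subgroupOf H) :=
        (Nat.card_congr (Subgroup.subgroupOfEquivOfLe hQH).toEquiv).symm
    _ = Nat.card S := by rw [hQeqS]
    _ = p ^ (Nat.card H).factorization p := hcardS
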